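/- Let x and y be non-commuting words, k ≥ 2, ℓ ≥ 2, and suppose x · y^k = z^ℓ with y^k a suffix of z. Then there exists a word q such that z = q·y^k and x = (q·y^k)^(ℓ−1) · q, and q does not commute with y. -/
import Mathlib


/-- `wpow u n` is the `n`-fold concatenation of the word `u` with itself. -/
def wpow {α : Type*} (u : List α) (n : ℕ) : List α := (List.replicate n u).flatten

lemma wpow_succ {α : Type*} (u : List α) (n : ℕ) :
    wpow u (n + 1) = u ++ wpow u n := by
  simp [wpow, List.replicate_succ]

lemma wpow_succ' {α : Type*} (u : List α) (n : ℕ) :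
    wpow u (n + 1) = wpow u n ++ u := by
  simp [wpow, List.replicate_succ']

lemma comm_wpow {α : Type*} {a b : List α} (h : a ++ b = b ++ a) (n : ℕ) :
    wpow a n ++ b = b ++ wpow a n := by
  induction n with
  | zero => simp [wpow]
  | succ n ih =>
    rw [wpow_succ, List.append_assoc, ih, ← List.append_assoc, h, List.append_assoc]

/-- Case D of the parametric solution of `x^j y^k = z^ℓ`: the case `x·y^k = z^ℓ`,
`k ≥ 2`, `ℓ ≥ 2`, with `y^k` a suffix of `z`. -/
theorem LS_case_D {α : Type*} (x y z : List α) (k l : ℕ)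
    (hcomm : x ++ y ≠ y ++ x) (hk : 2 ≤ k) (hl : 2 ≤ l)
    (h : x ++ wpow y k = wpow z l) (hsuf : wpow y k <:+ z) :
    ∃ q : List α, z = q ++ wpow y k ∧ x = wpow (q ++ wpow y k) (l - 1) ++ q ∧
      q ++ y ≠ y ++ q := by
  obtain ⟨q, hq⟩ := hsuf
  refine ⟨q, hq.symm, ?_, ?_⟩
  · have hl1 : l - 1 + 1 = l := by omega
    have hx : x ++ wpow y k = (wpow z (l - 1) ++ q) ++ wpow y k := by
      rw [h, ← hl1, wpow_succ', ← hq]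
      simp [List.append_assoc]
    have := List.append_cancel_right hx
    rw [this, ← hq]
  · intro hqy
    apply hcomm
    have hzy : z ++ y = y ++ z := by
      rw [← hq, List.append_assoc, comm_wpow rfl k, ← List.append_assoc, hqy,
        List.append_assoc]
    have hx : x ++ wpow y k = (wpow z (l - 1) ++ q) ++ wpow y k := by
      have hl1 : l - 1 + 1 = l := by omega
      rw [h, ← hl1, wpow_succ', ← hq]
      simp [List.append_assoc]
    rw [List.append_cancel_right hx, List.append_assoc, hqy, ← List.append_assoc,
      comm_wpow hzy, List.append_assoc]
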